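/- arXiv:2209.08040 — 4 statements merged into one kernel-verified Lean document; each statement's English description precedes it below -/
import Mathlib

section
/- (Accuracy Rashomon set covers Balanced Accuracy Rashomon set) Let q⁺, q⁻ ∈ (0,1), q⁺ + q⁻ = 1, q_min = min(q⁺,q⁻), q_max = max(q⁺,q⁻), λ ≥ 0 and depth limit d so that H_t ≤ 2^d for all trees t. Define B_δ = {t : (FPR_t + FNR_t)/2 + λH_t ≤ δ} and A_θ = {t : q⁻FPR_t + q⁺FNR_t + λH_t ≤ θ}. If θ ≥ min(2q_max·δ, q_max + (2δ−1)q_min + (1 − 2q_min)·λ·2^d), then B_δ ⊆ A_θ. -/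
/-- Accuracy Rashomon set covers Balanced Accuracy Rashomon set: any tree
(described by its rates FPR, FNR and leaf count H with 1 ≤ H ≤ 2^d) in the
Balanced Accuracy Rashomon set B_δ belongs to the Accuracy Rashomon set A_θ,
provided θ ≥ min(2 q_max δ, q_max + (2δ-1) q_min + (1 - 2 q_min) λ 2^d). -/
theorem accuracy_covers_balanced_accuracy
    (qp qm lam δ θ : ℝ) (d : ℕ)
    (hqp0 : 0 < qp) (hqp1 : qp < 1) (hqm0 : 0 < qm) (hqm1 : qm < 1)
    (hsum : qp + qm = 1) (hlam : 0 ≤ lam)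
    (hθ : θ ≥ min (2 * max qp qm * δ)
        (max qp qm + (2 * δ - 1) * min qp qm + (1 - 2 * min qp qm) * lam * 2 ^ d)) :
    ∀ FPR FNR H : ℝ,
      0 ≤ FPR → FPR ≤ 1 → 0 ≤ FNR → FNR ≤ 1 →
      1 ≤ H → H ≤ 2 ^ d →
      (FPR + FNR) / 2 + lam * H ≤ δ →
      qm * FPR + qp * FNR + lam * H ≤ θ := by
  intro FPR FNR H h1 h2 h3 h4 h5 h6 hbal
  set M := max qp qm with hM
  set m := min qp qm with hm
  have hMm : M + m = 1 := by
    rw [hM, hm, max_add_min, hsum]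
  have hmM : m ≤ M := min_le_max
  have hm0 : 0 < m := lt_min hqp0 hqm0
  have hM2 : 1 ≤ 2 * M := by linarith
  have hlamH : 0 ≤ lam * H := by positivity
  have hlamd : lam * H ≤ lam * 2 ^ d := by
    exact mul_le_mul_of_nonneg_left h6 hlam
  have hval : qm * FPR + qp * FNR + lam * H ≤ θ ∨ True := Or.inr trivial
  -- Bound 1
  have hb1 : qm * FPR + qp * FNR + lam * H ≤ 2 * M * δ := by
    have hqmM : qm ≤ M := le_max_right _ _
    have hqpM : qp ≤ M := le_max_left _ _
    nlinarith [mul_le_mul_of_nonneg_right hqmM h1, mul_le_mul_of_nonneg_right hqpM h3,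
      mul_nonneg (by linarith : (0:ℝ) ≤ 2*M - 1) hlamH,
      mul_le_mul_of_nonneg_left hbal (by linarith : (0:ℝ) ≤ 2*M)]
  -- Bound 2
  have hb2 : qm * FPR + qp * FNR + lam * H ≤
      M + (2 * δ - 1) * m + (1 - 2 * m) * lam * 2 ^ d := by
    have hm12 : 2 * m ≤ 1 := by linarith
    have key : qm * FPR + qp * FNR ≤ m * (FPR + FNR) + (M - m) := by
      rcases le_total qp qm with h | h
      · have hMe : M = qm := max_eq_right h
        have hme : m = qp := min_eq_left h
        nlinarith [mul_le_mul_of_nonneg_left h2 (by linarith : (0:ℝ) ≤ M - m)]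
      · have hMe : M = qp := max_eq_left h
        have hme : m = qm := min_eq_right h
        nlinarith [mul_le_mul_of_nonneg_left h4 (by linarith : (0:ℝ) ≤ M - m)]
    nlinarith [mul_le_mul_of_nonneg_left hbal (by linarith : (0:ℝ) ≤ 2*m),
      mul_le_mul_of_nonneg_left hlamd (by linarith : (0:ℝ) ≤ 1 - 2*m)]
  calc qm * FPR + qp * FNR + lam * H ≤ _ := le_min hb1 hb2
    _ ≤ θ := hθ
end

section
/- Suppose q⁺, q⁻ ∈ (0,1), q⁺ + q⁻ = 1, FPR, FNR ∈ [0,1], FPR ≤ 1, and 2q⁺ + q⁻FPR − q⁺FNR > 0 with FNR < 1. Let f1 = (q⁻FPR + q⁺FNR)/(2q⁺ + q⁻FPR − q⁺FNR). Then q⁻FPR + q⁺FNR ≤ 2f1/(1 + f1). -/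
/-- Case 2 inequality of the F1 coverage theorem: the weighted
misclassification loss is at most `2 f1 / (1 + f1)`. -/
theorem weighted_loss_le_f1_ratio_case2
    (qp qm FPR FNR f1 : ℝ)
    (hqp0 : 0 < qp) (hqp1 : qp < 1) (hqm0 : 0 < qm) (hqm1 : qm < 1)
    (hsum : qp + qm = 1)
    (hFPR0 : 0 ≤ FPR) (hFPR1 : FPR ≤ 1) (hFNR0 : 0 ≤ FNR) (hFNR1 : FNR ≤ 1)
    (hD : 0 < 2 * qp + qm * FPR - qp * FNR) (hFNRlt : FNR < 1)
    (hf1 : f1 = (qm * FPR + qp * FNR) / (2 * qp + qm * FPR - qp * FNR)) :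
    qm * FPR + qp * FNR ≤ 2 * f1 / (1 + f1) := by
  have hL0 : 0 ≤ qm * FPR + qp * FNR := by positivity
  have hS : 0 < qp + qm * FPR := by positivity
  have hS1 : qp + qm * FPR ≤ 1 := by nlinarith
  have h1f : 0 < 1 + f1 := by
    rw [hf1]
    positivity
  have key : 2 * f1 / (1 + f1) = (qm * FPR + qp * FNR) / (qp + qm * FPR) := by
    rw [hf1]
    field_simp
    ring
  rw [key]
  rw [le_div_iff₀ hS]
  nlinarith
end

section
/- (Optimal tree after removing instances stays in the full-data Rashomon set) Let t* minimize Obj(·, full) over a class T of trees and let t̃* minimize Obj(·, reduced) over T, where the reduced dataset removes the |K| points indexed by K (|K| < n). Then Obj(t̃*, full) ≤ Obj(t*, full) + 2|K|/n. Consequently, if ε ≥ 2|K|/(n·Obj(t*, full)), then t̃* belongs to the ε-Rashomon set {t ∈ T : Obj(t, full) ≤ (1+ε)·Obj(t*, full)}. -/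
/-- Full-data objective of tree with per-point misclassification `miss`. -/
noncomputable def objFull (n : ℕ) (miss : Fin n → ℝ) (lam H : ℝ) : ℝ :=
  (1 / (n : ℝ)) * ∑ i, miss i + lam * H

/-- Reduced-data objective after removing the points indexed by `K`. -/
noncomputable def objRed (n : ℕ) (K : Finset (Fin n)) (miss : Fin n → ℝ) (lam H : ℝ) : ℝ :=
  (1 / ((n : ℝ) - K.card)) * ∑ i ∈ Kᶜ, miss i + lam * H

lemma perturb_bounds (a b N k : ℝ) (hN : 0 < N) (hk : 0 ≤ k) (hkN : k < N)
    (ha0 : 0 ≤ a) (ha : a ≤ N - k) (hb0 : 0 ≤ b) (hb : b ≤ k) :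
    (1 / N) * (a + b) ≤ (1 / (N - k)) * a + k / N ∧
    (1 / (N - k)) * a ≤ (1 / N) * (a + b) + k / N := by
  have hNk : 0 < N - k := by linarith
  constructor
  · rw [show (1/N)*(a+b) = (a+b)/N from by ring, show (1/(N-k))*a = a/(N-k) from by ring,
      div_add_div _ _ (ne_of_gt hNk) (ne_of_gt hN), div_le_div_iff₀ hN (by positivity)]
    nlinarith [mul_nonneg ha0 hk, mul_nonneg (sub_nonneg.2 hb) hNk.le]
  · rw [show (1/N)*(a+b) = (a+b)/N from by ring, show (1/(N-k))*a = a/(N-k) from by ring,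
      div_add_div _ _ (ne_of_gt hN) (ne_of_gt hN), div_le_div_iff₀ hNk (by positivity)]
    nlinarith [mul_nonneg (sub_nonneg.2 ha) hk, mul_nonneg hb0 hNk.le]

lemma obj_bridge (n : ℕ) (hn : 0 < n) (K : Finset (Fin n)) (hK : K.card < n)
    (m : Fin n → ℝ) (hm : ∀ i, m i = 0 ∨ m i = 1) (lam H : ℝ) :
    objFull n m lam H ≤ objRed n K m lam H + K.card / n ∧
    objRed n K m lam H ≤ objFull n m lam H + K.card / n := by
  have hsplit : (∑ i ∈ Kᶜ, m i) + ∑ i ∈ K, m i = ∑ i, m i :=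
    Finset.sum_compl_add_sum K m
  have h0 : ∀ i, 0 ≤ m i := fun i => by rcases hm i with h | h <;> simp [h]
  have h1 : ∀ i, m i ≤ 1 := fun i => by rcases hm i with h | h <;> simp [h]
  have ha0 : 0 ≤ ∑ i ∈ Kᶜ, m i := Finset.sum_nonneg fun i _ => h0 i
  have hb0 : 0 ≤ ∑ i ∈ K, m i := Finset.sum_nonneg fun i _ => h0 i
  have ha : (∑ i ∈ Kᶜ, m i) ≤ (n : ℝ) - K.card := by
    have := Finset.sum_le_card_nsmul Kᶜ m 1 (fun i _ => h1 i)
    have hcard : (Kᶜ.card : ℝ) = (n : ℝ) - K.card := by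
      rw [Finset.card_compl]
      simp [Nat.cast_sub hK.le]
    simpa [hcard] using this
  have hb : (∑ i ∈ K, m i) ≤ (K.card : ℝ) := by
    have := Finset.sum_le_card_nsmul K m 1 (fun i _ => h1 i)
    simpa using this
  have hN : (0 : ℝ) < n := by exact_mod_cast hn
  have hkN : (K.card : ℝ) < n := by exact_mod_cast hK
  obtain ⟨h1', h2'⟩ := perturb_bounds (∑ i ∈ Kᶜ, m i) (∑ i ∈ K, m i) n K.card hN
    (by positivity) hkN ha0 ha hb0 hb
  constructor
  · unfold objFull objRed
    rw [← hsplit]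
    linarith
  · unfold objFull objRed
    rw [← hsplit]
    linarith

/-- Optimal tree after removing a group of instances is still in the
full-dataset Rashomon set: if `tstar` minimizes the full objective and
`ttil` minimizes the reduced objective, then
`objFull ttil ≤ objFull tstar + 2|K|/n`; hence if
`ε ≥ 2|K|/(n · objFull tstar)`, `ttil` is in the ε-Rashomon set. -/
theorem opt_tree_after_removal_in_rashomon
    {T : Type*} (n : ℕ) (hn : 0 < n) (K : Finset (Fin n)) (hK : K.card < n)
    (miss : T → Fin n → ℝ) (hmiss : ∀ t i, miss t i = 0 ∨ miss t i = 1)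
    (lam : ℝ) (H : T → ℝ)
    (tstar ttil : T)
    (hstar : ∀ t, objFull n (miss tstar) lam (H tstar) ≤ objFull n (miss t) lam (H t))
    (htil : ∀ t, objRed n K (miss ttil) lam (H ttil) ≤ objRed n K (miss t) lam (H t)) :
    objFull n (miss ttil) lam (H ttil)
        ≤ objFull n (miss tstar) lam (H tstar) + 2 * K.card / n ∧
    (0 < objFull n (miss tstar) lam (H tstar) →
      ∀ ε : ℝ, ε ≥ 2 * K.card / (n * objFull n (miss tstar) lam (H tstar)) →
        objFull n (miss ttil) lam (H ttil)
          ≤ (1 + ε) * objFull n (miss tstar) lam (H tstar)) := by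
  have hN : (0 : ℝ) < n := by exact_mod_cast hn
  obtain ⟨h1, _⟩ := obj_bridge n hn K hK (miss ttil) (hmiss ttil) lam (H ttil)
  obtain ⟨_, h2⟩ := obj_bridge n hn K hK (miss tstar) (hmiss tstar) lam (H tstar)
  have hmid := htil tstar
  have hmain : objFull n (miss ttil) lam (H ttil)
      ≤ objFull n (miss tstar) lam (H tstar) + 2 * K.card / n := by
    have : 2 * (K.card : ℝ) / n = K.card / n + K.card / n := by ring
    rw [this]; linarith
  refine ⟨hmain, fun hpos ε hε => ?_⟩
  have hεF : 2 * (K.card : ℝ) / n ≤ ε * objFull n (miss tstar) lam (H tstar) := by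
    rw [ge_iff_le, div_le_iff₀ (by positivity)] at hε
    rw [div_le_iff₀ hN]
    have : ε * ((n : ℝ) * objFull n (miss tstar) lam (H tstar))
        = ε * objFull n (miss tstar) lam (H tstar) * n := by ring
    linarith
  linarith [hmain]
end

section
/- (Reduced-data Rashomon set contained in full-data Rashomon set) With notation as before, suppose t ∈ T satisfies Obj(t, reduced) ≤ (1+ε')·Obj(t̃*, reduced) where t̃* is optimal on the reduced data. Then Obj(t, full) ≤ (1+ε')·Obj(t*, full) + (2+ε')·|K|/n. Consequently, if ε ≥ ε' + (2+ε')·|K|/(n·Obj(t*, full)), then t lies in the full-data ε-Rashomon set {t : Obj(t, full) ≤ (1+ε)·Obj(t*, full)}. -/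
lemma auxObj (n : ℕ) (hn : 0 < n) (K : Finset (Fin n)) (hK : K.card < n)
    (f : Fin n → ℝ) (hf : ∀ i, f i = 0 ∨ f i = 1) (lam H : ℝ) :
    objFull n f lam H ≤ objRed n K f lam H + K.card / n ∧
    objRed n K f lam H ≤ objFull n f lam H + K.card / n := by
  have hN : (0:ℝ) < n := by exact_mod_cast hn
  have hmN : (K.card : ℝ) < n := by exact_mod_cast hK
  have hNm : (0:ℝ) < (n:ℝ) - K.card := by linarith
  set a := ∑ i ∈ Kᶜ, f i with ha_def
  set b := ∑ i ∈ K, f i with hb_def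
  have hS : b + a = ∑ i, f i := Finset.sum_add_sum_compl K f
  have ha : 0 ≤ a := Finset.sum_nonneg fun i _ => by rcases hf i with h | h <;> simp [h]
  have hb : 0 ≤ b := Finset.sum_nonneg fun i _ => by rcases hf i with h | h <;> simp [h]
  have hbm : b ≤ K.card := by
    have := Finset.sum_le_card_nsmul K f 1 (fun i _ => by rcases hf i with h | h <;> simp [h])
    simpa using this
  have hcard : (Kᶜ.card : ℝ) = (n:ℝ) - K.card := by
    rw [Finset.card_compl]
    simp [Nat.cast_sub hK.le]
  have haN : a ≤ (n:ℝ) - K.card := by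
    have h2 : a ≤ (Kᶜ.card:ℝ) := by
      simpa using Finset.sum_le_card_nsmul Kᶜ f 1 (fun i _ => by rcases hf i with h | h <;> simp [h])
    linarith [hcard, h2]
  simp only [objFull, objRed, ← hS]
  constructor
  · have key : (b + a - K.card) / n ≤ a / ((n:ℝ) - K.card) := by
      rw [div_le_div_iff₀ hN hNm]
      nlinarith
    have e1 : (b + a - (K.card:ℝ)) / n = 1/(n:ℝ) * (b + a) - K.card / n := by ring
    have e2 : a / ((n:ℝ) - K.card) = 1/((n:ℝ) - K.card) * a := by ring
    linarith
  · have key : a / ((n:ℝ) - K.card) ≤ (b + a + K.card) / n := by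
      rw [div_le_div_iff₀ hNm hN]
      nlinarith
    have e1 : (b + a + (K.card:ℝ)) / n = 1/(n:ℝ) * (b + a) + K.card / n := by ring
    have e2 : a / ((n:ℝ) - K.card) = 1/((n:ℝ) - K.card) * a := by ring
    linarith


/-- Rashomon set after removing a group of instances is within the
full-dataset Rashomon set: if `t` is in the ε'-Rashomon set of the reduced
data, then `objFull t ≤ (1+ε') objFull tstar + (2+ε')|K|/n`; hence if
`ε ≥ ε' + (2+ε')|K|/(n · objFull tstar)`, `t` lies in the full-data
ε-Rashomon set. -/
theorem reduced_rashomon_subset_full_rashomon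
    {T : Type*} (n : ℕ) (hn : 0 < n) (K : Finset (Fin n)) (hK : K.card < n)
    (miss : T → Fin n → ℝ) (hmiss : ∀ t i, miss t i = 0 ∨ miss t i = 1)
    (lam : ℝ) (H : T → ℝ)
    (tstar ttil t : T) (ε' : ℝ) (hε' : 0 ≤ ε')
    (hstar : ∀ s, objFull n (miss tstar) lam (H tstar) ≤ objFull n (miss s) lam (H s))
    (htil : ∀ s, objRed n K (miss ttil) lam (H ttil) ≤ objRed n K (miss s) lam (H s))
    (ht : objRed n K (miss t) lam (H t)
        ≤ (1 + ε') * objRed n K (miss ttil) lam (H ttil)) :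
    objFull n (miss t) lam (H t)
        ≤ (1 + ε') * objFull n (miss tstar) lam (H tstar) + (2 + ε') * K.card / n ∧
    (0 < objFull n (miss tstar) lam (H tstar) →
      ∀ ε : ℝ, ε ≥ ε' + (2 + ε') * K.card / (n * objFull n (miss tstar) lam (H tstar)) →
        objFull n (miss t) lam (H t)
          ≤ (1 + ε) * objFull n (miss tstar) lam (H tstar)) := by
  have hN : (0:ℝ) < n := by exact_mod_cast hn
  have hm0 : (0:ℝ) ≤ K.card := by positivity
  have hc0 : (0:ℝ) ≤ (K.card:ℝ)/n := by positivity
  have hpos : (0:ℝ) < 1 + ε' := by linarith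
  have h1 := (auxObj n hn K hK (miss t) (hmiss t) lam (H t)).1
  have h4 := (auxObj n hn K hK (miss tstar) (hmiss tstar) lam (H tstar)).2
  have h3 := htil tstar
  have h5 : (1 + ε') * objRed n K (miss ttil) lam (H ttil)
      ≤ (1 + ε') * (objFull n (miss tstar) lam (H tstar) + K.card / n) :=
    mul_le_mul_of_nonneg_left (le_trans h3 h4) hpos.le
  have part1 : objFull n (miss t) lam (H t)
      ≤ (1 + ε') * objFull n (miss tstar) lam (H tstar) + (2 + ε') * K.card / n := by
    have e : (1 + ε') * (objFull n (miss tstar) lam (H tstar) + (K.card:ℝ) / n) + (K.card:ℝ)/n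
        = (1 + ε') * objFull n (miss tstar) lam (H tstar) + (2 + ε') * K.card / n := by
      ring
    linarith
  refine ⟨part1, fun hO ε hε => ?_⟩
  set O := objFull n (miss tstar) lam (H tstar)
  have e2 : (ε' + (2 + ε') * K.card / (n * O)) * O = ε' * O + (2 + ε') * K.card / n := by
    field_simp
  have h6 : (ε' + (2 + ε') * K.card / (n * O)) * O ≤ ε * O :=
    mul_le_mul_of_nonneg_right hε hO.le
  nlinarith
end
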